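/- Let f : ℕ → ℕ be monotone with f(x) ≥ 2^x for all x, and define the transfinite iterates f_α for α < ε₀ by f_0 = f and f_α(n) = max{f_β(f_β(n)) : β < α and N(β) ≤ N(α) + n} for α > 0, where N is the ordinal norm. Then each f_α is monotone and satisfies f_α(x) ≥ 2^x for all x. -/

import Mathlib

open Ordinal in
/-- The first epsilon number `ε₀`, the least fixed point of `α ↦ ω ^ α`. -/
noncomputable def eps0 : Ordinal := Ordinal.nfp (fun o => Ordinal.omega0 ^ o) 0

open Ordinal in
theorem stmt_18 (f : ℕ → ℕ) (hfm : Monotone f) (hf : ∀ x, 2 ^ x ≤ f x)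
    (N : Ordinal → ℕ) (hN0 : N 0 = 0)
    (F : Ordinal → ℕ → ℕ) (hF0 : F 0 = f)
    (hFmax : ∀ α : Ordinal, 0 < α → α < eps0 → ∀ n : ℕ,
      (∃ β, β < α ∧ N β ≤ N α + n ∧ F α n = F β (F β n)) ∧
      (∀ β, β < α → N β ≤ N α + n → F β (F β n) ≤ F α n)) :
    ∀ α : Ordinal, α < eps0 → Monotone (F α) ∧ ∀ x, 2 ^ x ≤ F α x := by
  intro α
  induction α using Ordinal.induction with
  | h α IH =>
    intro hα
    rcases eq_or_lt_of_le (zero_le (a := α)) with h0 | h0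
    · rw [← h0, hF0]
      exact ⟨hfm, hf⟩
    · have key : ∀ x, 2 ^ x ≤ F α x := by
        intro x
        obtain ⟨⟨β, hβα, hNβ, hEq⟩, _⟩ := hFmax α h0 hα x
        obtain ⟨hβm, hβ2⟩ := IH β hβα (hβα.trans hα)
        calc 2 ^ x ≤ F β x := hβ2 x
          _ ≤ F β (F β x) := hβm ((Nat.lt_two_pow_self (n := x)).le.trans (hβ2 x))
          _ = F α x := hEq.symm
      refine ⟨?_, key⟩
      intro n m hnm
      obtain ⟨⟨β, hβα, hNβ, hEq⟩, _⟩ := hFmax α h0 hα n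
      obtain ⟨_, hub⟩ := hFmax α h0 hα m
      obtain ⟨hβm, _⟩ := IH β hβα (hβα.trans hα)
      calc F α n = F β (F β n) := hEq
        _ ≤ F β (F β m) := hβm (hβm hnm)
        _ ≤ F α m := hub β hβα (hNβ.trans (by omega))
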